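/- For all integers n ≥ k ≥ 0 and a commutative ℚ-algebra element a, the coefficient of t^n in (1−t)^{−a}·(t/(1−t))^k/k!, multiplied by n!, equals C(n,k)·(a+k)^{(n−k)}, where x^{(m)} is the rising factorial. -/

import Mathlib

open PowerSeries

variable {R : Type*}

/-- The binomial series `(1−t)^{−a} = Σ_{m≥0} a⁽ᵐ⁾ tᵐ/m!`. -/
noncomputable def binomSeries [CommRing R] [Algebra ℚ R] (a : R) : PowerSeries R :=
  PowerSeries.mk fun m => ((m.factorial : ℚ)⁻¹) • (ascPochhammer R m).eval a

/-- The series `t/(1−t) = Σ_{n≥1} tⁿ`. -/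
noncomputable def geomSeries [CommRing R] : PowerSeries R :=
  PowerSeries.mk fun n => if n = 0 then 0 else 1

open Polynomial in
lemma sum_asc [CommRing R] [Algebra ℚ R] (x : R) : ∀ M : ℕ,
    ∑ m ∈ Finset.range (M+1), ((m.factorial : ℚ)⁻¹) • (ascPochhammer R m).eval x
      = ((M.factorial : ℚ)⁻¹) • (ascPochhammer R M).eval (x+1)
  | 0 => by simp
  | M+1 => by
    rw [Finset.sum_range_succ, sum_asc x M]
    have h1 : (ascPochhammer R (M+1)).eval x = x * (ascPochhammer R M).eval (x+1) := by
      rw [ascPochhammer_succ_left]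
      simp [eval_comp]
    have h2 : (ascPochhammer R (M+1)).eval (x+1)
        = (ascPochhammer R M).eval (x+1) * (x + 1 + M) := by
      rw [ascPochhammer_succ_eval]
    have hf : ((M.factorial : ℚ))⁻¹ = ((M+1).factorial : ℚ)⁻¹ * (M+1) := by
      rw [Nat.factorial_succ]
      push_cast
      field_simp
    have h3 : ((M:ℚ)+1) • (ascPochhammer R M).eval (x+1)
        = ((M:R)+1) * (ascPochhammer R M).eval (x+1) := by
      rw [Algebra.smul_def]
      push_cast
      ring_nf
    rw [h1, h2, hf, mul_smul, ← smul_add]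
    congr 1
    rw [h3]
    ring

lemma coeff_geom [CommRing R] (m : ℕ) :
    PowerSeries.coeff m (geomSeries (R := R)) = if m = 0 then 0 else 1 := by
  simp [geomSeries]

open Polynomial in
lemma coeff_binom_geom [CommRing R] [Algebra ℚ R] (a : R) : ∀ (k n : ℕ),
    PowerSeries.coeff n (binomSeries a * geomSeries ^ k) =
      if n < k then 0
      else (((n-k).factorial : ℚ)⁻¹) • (ascPochhammer R (n-k)).eval (a + k)
  | 0, n => by simp [binomSeries]
  | k+1, n => by
    rw [pow_succ, ← mul_assoc, PowerSeries.coeff_mul,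
      Finset.Nat.sum_antidiagonal_eq_sum_range_succ (fun i j =>
        PowerSeries.coeff i (binomSeries a * geomSeries ^ k) * PowerSeries.coeff j geomSeries)]
    have hterm : ∀ i ∈ Finset.range (n+1),
        PowerSeries.coeff i (binomSeries a * geomSeries ^ k) *
          PowerSeries.coeff (n - i) geomSeries =
        if i < k ∨ i = n then 0
          else ((i-k).factorial : ℚ)⁻¹ • (ascPochhammer R (i-k)).eval (a + k) := by
      intro i hi
      rw [Finset.mem_range] at hi
      rw [coeff_binom_geom a k i, coeff_geom]
      by_cases h1 : i < k
      · simp [h1]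
      · by_cases h2 : i = n
        · simp [h2, h1]
        · have : n - i ≠ 0 := Nat.sub_ne_zero_of_lt (lt_of_le_of_ne (Nat.lt_succ_iff.mp hi) h2)
          simp [h1, h2, this]
    rw [Finset.sum_congr rfl hterm]
    by_cases hn : n < k + 1
    · rw [if_pos hn]
      apply Finset.sum_eq_zero
      intro i hi
      rw [Finset.mem_range, Nat.lt_succ_iff] at hi
      have : i < k ∨ i = n := by omega
      simp [this]
    · rw [if_neg hn]
      push_neg at hn
      have hsplit : (∑ i ∈ Finset.range (n+1),
          if i < k ∨ i = n then (0:R)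
            else ((i-k).factorial : ℚ)⁻¹ • (ascPochhammer R (i-k)).eval (a + k)) =
          ∑ m ∈ Finset.range (n-k), ((m.factorial : ℚ)⁻¹) • (ascPochhammer R m).eval (a + k) := by
        calc (∑ i ∈ Finset.range (n+1),
              if i < k ∨ i = n then (0:R)
                else ((i-k).factorial : ℚ)⁻¹ • (ascPochhammer R (i-k)).eval (a + k))
            = ∑ i ∈ Finset.range (n+1),
              if ¬(i < k ∨ i = n)
                then ((i-k).factorial : ℚ)⁻¹ • (ascPochhammer R (i-k)).eval (a + k) else 0 := by
              refine Finset.sum_congr rfl fun i _ => ?_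
              rw [ite_not]
          _ = ∑ i ∈ (Finset.range (n+1)).filter (fun i => ¬(i < k ∨ i = n)),
                ((i-k).factorial : ℚ)⁻¹ • (ascPochhammer R (i-k)).eval (a + k) :=
              (Finset.sum_filter _ _).symm
          _ = ∑ i ∈ Finset.Ico k n,
                ((i-k).factorial : ℚ)⁻¹ • (ascPochhammer R (i-k)).eval (a + k) := by
              congr 1
              ext i
              simp only [Finset.mem_filter, Finset.mem_range, Finset.mem_Ico]
              omega
          _ = ∑ m ∈ Finset.range (n-k),
                (((k+m)-k).factorial : ℚ)⁻¹ • (ascPochhammer R ((k+m)-k)).eval (a + k) :=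
              by rw [Finset.sum_Ico_eq_sum_range]
          _ = ∑ m ∈ Finset.range (n-k), ((m.factorial : ℚ)⁻¹) • (ascPochhammer R m).eval (a + k) := by
              simp [Nat.add_sub_cancel_left]
      rw [hsplit]
      have hnk : n - k = (n - (k+1)) + 1 := by omega
      rw [hnk, sum_asc (a + (k:R)) (n - (k+1))]
      congr 2
      push_cast
      ring

/-- For `0 ≤ k ≤ n`:
`n! · [tⁿ] ((1−t)^{−a}·(t/(1−t))^k/k!) = C(n,k)·(a+k)^{(n−k)}`,
identifying the generalized Jacobi–Rogers polynomials for Euler's continued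
fraction of rising powers. -/
theorem jacobiRogers_risingPowers [CommRing R] [Algebra ℚ R] (a : R)
    (n k : ℕ) (hk : k ≤ n) :
    (n.factorial : R) *
      PowerSeries.coeff n
        (binomSeries a * geomSeries ^ k * PowerSeries.C (algebraMap ℚ R ((k.factorial : ℚ)⁻¹))) =
    (n.choose k : R) * (ascPochhammer R (n - k)).eval (a + (k : R)) := by
  rw [PowerSeries.coeff_mul_C, coeff_binom_geom, if_neg (not_lt.mpr hk)]
  have h1 : ∀ (q : ℚ) (x : R), x * algebraMap ℚ R q = q • x := fun q x => by
    rw [Algebra.smul_def, mul_comm]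
  have h2 : (n.factorial : R) = algebraMap ℚ R (n.factorial : ℚ) := by push_cast; ring
  have h3 : (n.choose k : R) = algebraMap ℚ R (n.choose k : ℚ) := by push_cast; ring
  rw [h1, smul_smul, h2, ← Algebra.smul_def, smul_smul, h3, ← Algebra.smul_def]
  congr 1
  rw [Nat.cast_choose ℚ hk]
  have hne : ((n-k).factorial : ℚ) ≠ 0 := Nat.cast_ne_zero.mpr (Nat.factorial_ne_zero _)
  have hne2 : (k.factorial : ℚ) ≠ 0 := Nat.cast_ne_zero.mpr (Nat.factorial_ne_zero _)
  field_simp
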